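/- Let Q be the 13-vertex Greenwood–Gleason graph (the Paley-type graph on GF(13) with x ~ y iff x − y is a cubic residue, i.e., x − y ∈ {±1, ±5, ±8} mod 13... equivalently the cyclic graph C₁₃(1,5) used in the R(3,5) lower bound construction). Then cl(Q) = 4 and α(Q) = 2. -/
import Mathlib

open SimpleGraph

/-- The Greenwood–Gleason graph `Q`: the complement of the circulant graph on
`ℤ/13` with connection set `{±1, ±5}`. -/
def Q : SimpleGraph (ZMod 13) :=
  (SimpleGraph.circulantGraph {1, -1, 5, -5})ᶜ

lemma cliqueNum_eq {α : Type*} [Fintype α] [DecidableEq α] {G : SimpleGraph α} {n : ℕ}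
    (h1 : ∃ s, G.IsNClique n s) (h2 : ∀ s, ¬ G.IsNClique (n + 1) s) :
    G.cliqueNum = n := by
  obtain ⟨s, hs⟩ := h1
  refine le_antisymm ?_ (hs.card_eq ▸ hs.isClique.card_le_cliqueNum)
  by_contra hlt
  push_neg at hlt
  obtain ⟨t, ht⟩ := G.exists_isNClique_cliqueNum
  have htc := ht.card_eq
  obtain ⟨u, hut, hucard⟩ := Finset.exists_subset_card_eq (show n + 1 ≤ t.card by omega)
  exact h2 u ⟨ht.isClique.subset hut, hucard⟩

instance : DecidablePred (· ∈ ({1, -1, 5, -5} : Set (ZMod 13))) := fun x =>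
  decidable_of_iff (x = 1 ∨ x = -1 ∨ x = 5 ∨ x = -5) (by simp [Set.mem_insert_iff])

instance : DecidableRel Q.Adj := fun a b =>
  decidable_of_iff (a ≠ b ∧ ¬(SimpleGraph.circulantGraph {1, -1, 5, -5}).Adj a b) Iff.rfl

lemma Q_adj_translate (x y d : ZMod 13) : Q.Adj (x + d) (y + d) ↔ Q.Adj x y := by
  simp [Q, compl_adj, circulantGraph_adj_translate]

lemma Q_adj_sub {x y a : ZMod 13} (h : Q.Adj x y) : Q.Adj (x - a) (y - a) := by
  have h' : Q.Adj (x - a + a) (y - a + a) := by simpa using h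
  exact (Q_adj_translate _ _ a).mp h'

lemma Qc_adj_translate (x y d : ZMod 13) : Qᶜ.Adj (x + d) (y + d) ↔ Qᶜ.Adj x y := by
  rw [show Qᶜ = SimpleGraph.circulantGraph {1, -1, 5, -5} from compl_compl _]
  exact circulantGraph_adj_translate

lemma Qc_adj_sub {x y a : ZMod 13} (h : Qᶜ.Adj x y) : Qᶜ.Adj (x - a) (y - a) := by
  have h' : Qᶜ.Adj (x - a + a) (y - a + a) := by simpa using h
  exact (Qc_adj_translate _ _ a).mp h'

set_option maxRecDepth 10000 in
lemma Q_zero_free : ∀ b c d e : ZMod 13,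
    ¬(Q.Adj 0 b ∧ Q.Adj 0 c ∧ Q.Adj 0 d ∧ Q.Adj 0 e ∧ Q.Adj b c ∧ Q.Adj b d ∧ Q.Adj b e ∧
      Q.Adj c d ∧ Q.Adj c e ∧ Q.Adj d e) := by decide

lemma Qc_zero_free : ∀ b c : ZMod 13, ¬(Qᶜ.Adj 0 b ∧ Qᶜ.Adj 0 c ∧ Qᶜ.Adj b c) := by decide

lemma Q_no5 : ∀ s, ¬ Q.IsNClique 5 s := by
  intro s hs
  obtain ⟨a, t1, hat, rfl, ht1⟩ := Finset.card_eq_succ.mp hs.card_eq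
  obtain ⟨b, t2, hbt, rfl, ht2⟩ := Finset.card_eq_succ.mp ht1
  obtain ⟨c, t3, hct, rfl, ht3⟩ := Finset.card_eq_succ.mp ht2
  obtain ⟨d, t4, hdt, rfl, ht4⟩ := Finset.card_eq_succ.mp ht3
  obtain ⟨e, rfl⟩ := Finset.card_eq_one.mp ht4
  simp only [Finset.mem_insert, Finset.mem_singleton, not_or] at hat hbt hct hdt
  have hc := hs.isClique
  have adj : ∀ x y : ZMod 13, x ∈ ({a, b, c, d, e} : Finset (ZMod 13)) →
      y ∈ ({a, b, c, d, e} : Finset (ZMod 13)) → x ≠ y → Q.Adj x y := fun x y hx hy hxy =>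
    hc (by simpa using hx) (by simpa using hy) hxy
  refine Q_zero_free (b - a) (c - a) (d - a) (e - a) ?_
  have h0 : (0 : ZMod 13) = a - a := by ring
  refine ⟨h0 ▸ Q_adj_sub (adj a b (by simp) (by simp) hat.1),
          h0 ▸ Q_adj_sub (adj a c (by simp) (by simp) hat.2.1),
          h0 ▸ Q_adj_sub (adj a d (by simp) (by simp) hat.2.2.1),
          h0 ▸ Q_adj_sub (adj a e (by simp) (by simp) hat.2.2.2),
          Q_adj_sub (adj b c (by simp) (by simp) hbt.1),
          Q_adj_sub (adj b d (by simp) (by simp) hbt.2.1),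
          Q_adj_sub (adj b e (by simp) (by simp) hbt.2.2),
          Q_adj_sub (adj c d (by simp) (by simp) hct.1),
          Q_adj_sub (adj c e (by simp) (by simp) hct.2),
          Q_adj_sub (adj d e (by simp) (by simp) hdt)⟩

lemma Qc_no3 : ∀ s, ¬ Qᶜ.IsNClique 3 s := by
  intro s hs
  obtain ⟨a, t1, hat, rfl, ht1⟩ := Finset.card_eq_succ.mp hs.card_eq
  obtain ⟨b, t2, hbt, rfl, ht2⟩ := Finset.card_eq_succ.mp ht1
  obtain ⟨c, rfl⟩ := Finset.card_eq_one.mp ht2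
  simp only [Finset.mem_insert, Finset.mem_singleton, not_or] at hat hbt
  have hc := hs.isClique
  have adj : ∀ x y : ZMod 13, x ∈ ({a, b, c} : Finset (ZMod 13)) →
      y ∈ ({a, b, c} : Finset (ZMod 13)) → x ≠ y → Qᶜ.Adj x y := fun x y hx hy hxy =>
    hc (by simpa using hx) (by simpa using hy) hxy
  refine Qc_zero_free (b - a) (c - a) ?_
  have h0 : (0 : ZMod 13) = a - a := by ring
  exact ⟨h0 ▸ Qc_adj_sub (adj a b (by simp) (by simp) hat.1),
         h0 ▸ Qc_adj_sub (adj a c (by simp) (by simp) hat.2),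
         Qc_adj_sub (adj b c (by simp) (by simp) hbt)⟩

theorem stmt8 : Q.cliqueNum = 4 ∧ Qᶜ.cliqueNum = 2 := by
  constructor
  · exact cliqueNum_eq ⟨{0, 2, 4, 6}, by decide⟩ Q_no5
  · exact cliqueNum_eq ⟨{0, 1}, by decide⟩ Qc_no3
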